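/- Let G be an r-regular graph on n vertices and let τ < 0 be the smallest eigenvalue of its adjacency matrix. Then the stability number satisfies α(G) ≤ n/(1 - r/τ) (Hoffman's ratio bound). -/

import Mathlib

open scoped Classical
open Matrix

set_option linter.unusedSectionVars false
set_option linter.unusedVariables false

/-- The real adjacency matrix of a simple graph. -/
noncomputable def adjMat {V : Type} (G : SimpleGraph V) : Matrix V V ℝ :=
  Matrix.of fun i j => if G.Adj i j then 1 else 0

/-- The set of eigenvalues of a real matrix. -/
def matrixSpectrum {V : Type} [Fintype V] (A : Matrix V V ℝ) : Set ℝ :=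
  {μ | ∃ v : V → ℝ, v ≠ 0 ∧ A.mulVec v = μ • v}

/-- The stability number: the largest cardinality of a set of pairwise
non-adjacent vertices. -/
noncomputable def stabilityNumber {V : Type} (G : SimpleGraph V) : ℕ :=
  sSup {n | ∃ s : Finset V, (∀ a ∈ s, ∀ b ∈ s, ¬ G.Adj a b) ∧ s.card = n}

section Aux
variable {V : Type} [Fintype V] (G : SimpleGraph V)


lemma adjMat_isHermitian : (adjMat G).IsHermitian := by
  ext i j
  simp [adjMat, Matrix.conjTranspose_apply, G.adj_comm]

lemma quad_bound (τ : ℝ) (hτmin : ∀ μ ∈ matrixSpectrum (adjMat G), τ ≤ μ)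
    (x : V → ℝ) : τ * (x ⬝ᵥ x) ≤ x ⬝ᵥ (adjMat G).mulVec x := by
  classical
  set A := adjMat G
  set B : Matrix V V ℝ := A - τ • 1 with hBdef
  have hB : B.IsHermitian := by
    have hA := adjMat_isHermitian G
    have h1 : (τ • (1 : Matrix V V ℝ)).IsHermitian := by
      ext i j
      simp [Matrix.conjTranspose_apply, Matrix.one_apply, eq_comm]
    exact hA.sub h1
  have hev : ∀ i, 0 ≤ hB.eigenvalues i := by
    intro i
    have hv := hB.mulVec_eigenvectorBasis i
    have hvne : (⇑(hB.eigenvectorBasis i) : V → ℝ) ≠ 0 := by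
      intro h
      exact hB.eigenvectorBasis.orthonormal.ne_zero i (by ext j; exact congrFun h j)
    have hAv : A.mulVec (⇑(hB.eigenvectorBasis i)) =
        (hB.eigenvalues i + τ) • (⇑(hB.eigenvectorBasis i)) := by
      have : B.mulVec (⇑(hB.eigenvectorBasis i)) =
          A.mulVec (⇑(hB.eigenvectorBasis i)) - τ • (⇑(hB.eigenvectorBasis i)) := by
        simp [hBdef, Matrix.sub_mulVec, Matrix.smul_mulVec, Matrix.one_mulVec]
      rw [this] at hv
      rw [add_smul]
      linear_combination (norm := module) hv
    have hmem : hB.eigenvalues i + τ ∈ matrixSpectrum A := ⟨_, hvne, hAv⟩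
    linarith [hτmin _ hmem]
  have hpsd : B.PosSemidef := hB.posSemidef_iff_eigenvalues_nonneg.mpr hev
  have := hpsd.dotProduct_mulVec_nonneg x
  simp only [star_trivial] at this
  have hBx : B.mulVec x = A.mulVec x - τ • x := by
    simp [hBdef, Matrix.sub_mulVec, Matrix.smul_mulVec, Matrix.one_mulVec]
  rw [hBx, dotProduct_sub, dotProduct_smul] at this
  simp only [smul_eq_mul] at this
  linarith

lemma row_sum (r : ℕ) (hreg : G.IsRegularOfDegree r) (i : V) :
    ∑ j, adjMat G i j = (r : ℝ) := by
  classical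
  have : ∑ j, adjMat G i j = ((Finset.univ.filter (G.Adj i)).card : ℝ) := by
    simp [adjMat, Finset.sum_boole]
  rw [this]
  have hd := hreg i
  rw [← hd]
  congr 1
  rw [← SimpleGraph.neighborFinset_eq_filter]
  rfl

lemma adjMat_transpose : (adjMat G)ᵀ = adjMat G := by
  ext i j
  simp [adjMat, Matrix.transpose_apply, G.adj_comm]

lemma main_calc (r : ℕ) (τ : ℝ) (hreg : G.IsRegularOfDegree r) (hτneg : τ < 0)
    (hτmin : ∀ μ ∈ matrixSpectrum (adjMat G), τ ≤ μ)
    (s : Finset V) (hind : ∀ a ∈ s, ∀ b ∈ s, ¬ G.Adj a b) (hpos : 0 < s.card) :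
    (s.card : ℝ) ≤ (Fintype.card V : ℝ) / (1 - (r : ℝ) / τ) := by
  classical
  set A := adjMat G with hA
  set α : ℝ := (s.card : ℝ) with hα
  set n : ℝ := (Fintype.card V : ℝ) with hn
  have hαpos : 0 < α := by rw [hα]; exact_mod_cast hpos
  have hnpos : 0 < n := by
    have : 0 < Fintype.card V := Fintype.card_pos_iff.mpr ⟨(Finset.card_pos.mp hpos).choose⟩
    rw [hn]; exact_mod_cast this
  set e : V → ℝ := fun i => if i ∈ s then 1 else 0 with he
  set o : V → ℝ := fun _ => 1 with ho
  set c : ℝ := α / n with hc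
  have hcval : c * n = α := by rw [hc, div_mul_cancel₀ _ hnpos.ne']
  have hee : e ⬝ᵥ e = α := by
    simp [dotProduct, he, ite_mul, Finset.sum_ite_mem, hα]
  have heo : e ⬝ᵥ o = α := by
    simp [dotProduct, he, ho, Finset.sum_ite_mem, hα]
  have hoe : o ⬝ᵥ e = α := by
    simp [dotProduct, he, ho, Finset.sum_ite_mem, hα]
  have hoo : o ⬝ᵥ o = n := by
    simp [dotProduct, ho, hn]
  have hAo : A.mulVec o = fun _ => (r : ℝ) := by
    funext i
    simp only [Matrix.mulVec, dotProduct, ho, mul_one]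
    exact row_sum G r hreg i
  have hAee : e ⬝ᵥ A.mulVec e = 0 := by
    simp only [dotProduct, Matrix.mulVec]
    apply Finset.sum_eq_zero
    intro i _
    by_cases hi : i ∈ s
    · have : (∑ j, A i j * e j) = 0 := by
        apply Finset.sum_eq_zero
        intro j _
        by_cases hj : j ∈ s
        · have : A i j = 0 := by
            simp [hA, adjMat, hind i hi j hj]
          simp [this]
        · simp [he, hj]
      simp [this]
    · simp [he, hi]
  have heAo : e ⬝ᵥ A.mulVec o = r * α := by
    rw [hAo]
    simp [dotProduct, he, ite_mul, Finset.sum_ite_mem, hα, mul_comm]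
  have hoAe : o ⬝ᵥ A.mulVec e = r * α := by
    rw [Matrix.dotProduct_mulVec, ← Matrix.mulVec_transpose, hA, adjMat_transpose, ← hA, hAo]
    simp [dotProduct, he, Finset.sum_ite_mem, hα, mul_comm]
  have hoAo : o ⬝ᵥ A.mulVec o = r * n := by
    rw [hAo]; simp [dotProduct, ho, hn, mul_comm]
  set x : V → ℝ := e - c • o with hx
  have key := quad_bound G τ hτmin x
  have hxAx : x ⬝ᵥ A.mulVec x = -2 * c * (r * α) + c ^ 2 * (r * n) := by
    simp only [hx, Matrix.mulVec_sub, Matrix.mulVec_smul, sub_dotProduct,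
      smul_dotProduct, dotProduct_sub, dotProduct_smul, smul_eq_mul]
    rw [hAee, heAo, hoAe, hoAo]
    ring
  have hxx : x ⬝ᵥ x = α - 2 * c * α + c ^ 2 * n := by
    simp only [hx, sub_dotProduct, smul_dotProduct, dotProduct_sub,
      dotProduct_smul, smul_eq_mul]
    rw [hee, heo, hoe, hoo]
    ring
  rw [hxAx, hxx] at key
  have e1 : c ^ 2 * n = c * α := by rw [pow_two, mul_assoc, hcval]
  have e2 : c ^ 2 * ((r : ℝ) * n) = (r : ℝ) * (c * α) := by
    calc c ^ 2 * ((r : ℝ) * n) = (r : ℝ) * (c ^ 2 * n) := by ring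
    _ = (r : ℝ) * (c * α) := by rw [e1]
  rw [e1, e2] at key
  -- key : τ * (α - 2 * c * α + c * α) ≤ -2 * c * (r * α) + r * (c * α)
  have h3' : α * (τ * (1 - c)) ≤ α * (-(c * (r : ℝ))) := by nlinarith [key]
  have h3 : τ * (1 - c) ≤ -(c * (r : ℝ)) := (mul_le_mul_iff_of_pos_left hαpos).mp h3'
  have h4 := mul_le_mul_of_nonneg_right h3 hnpos.le
  have h5 : τ * (1 - c) * n = τ * n - τ * α := by rw [← hcval]; ring
  have h6 : -(c * (r : ℝ)) * n = -((r : ℝ) * α) := by rw [← hcval]; ring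
  rw [h5, h6] at h4
  have hkey2 : τ * n ≤ α * (τ - (r : ℝ)) := by linarith
  have hτne : τ ≠ 0 := ne_of_lt hτneg
  have hden : 0 < 1 - (r : ℝ) / τ := by
    have : (r : ℝ) / τ ≤ 0 := div_nonpos_of_nonneg_of_nonpos (Nat.cast_nonneg r) hτneg.le
    linarith
  rw [le_div_iff₀ hden]
  have heq : α * (1 - (r : ℝ) / τ) = α * (τ - (r : ℝ)) / τ := by field_simp
  rw [heq, div_le_iff_of_neg hτneg]
  linarith


end Aux

theorem stmt2 {V : Type} [Fintype V] (G : SimpleGraph V) (r : ℕ) (τ : ℝ)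
    (hreg : G.IsRegularOfDegree r)
    (hτmem : τ ∈ matrixSpectrum (adjMat G))
    (hτmin : ∀ μ ∈ matrixSpectrum (adjMat G), τ ≤ μ)
    (hτneg : τ < 0) :
    (stabilityNumber G : ℝ) ≤ (Fintype.card V : ℝ) / (1 - (r : ℝ) / τ) := by
  classical
  set T : Set ℕ := {n | ∃ s : Finset V, (∀ a ∈ s, ∀ b ∈ s, ¬ G.Adj a b) ∧ s.card = n} with hT
  have hne : T.Nonempty := ⟨0, ∅, by simp⟩
  have hbdd : BddAbove T := ⟨Fintype.card V, by
    rintro m ⟨s, -, rfl⟩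
    exact Finset.card_le_univ s⟩
  have hmem : stabilityNumber G ∈ T := Nat.sSup_mem hne hbdd
  obtain ⟨s, hind, hcard⟩ := hmem
  by_cases h0 : s.card = 0
  · have : stabilityNumber G = 0 := by rw [← hcard, h0]
    rw [this]
    have hden : 0 < 1 - (r : ℝ) / τ := by
      have : (r : ℝ) / τ ≤ 0 := div_nonpos_of_nonneg_of_nonpos (Nat.cast_nonneg r) hτneg.le
      linarith
    push_cast
    exact div_nonneg (Nat.cast_nonneg _) hden.le
  · have := main_calc G r τ hreg hτneg hτmin s hind (Nat.pos_of_ne_zero h0)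
    rw [← hcard]
    exact_mod_cast this
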